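/- Let X be an n-dimensional polyhedral real normed space and Y ⊆ X a k-dimensional subspace, 1 ≤ k ≤ n−1. Then there exists a minimal projection P ∈ P_min(X,Y) having at least n norming pairs (x,f) ∈ ext B_X × ext B_{X*} with f(P(x)) = ‖P‖. -/

import Mathlib

open Metric Module

noncomputable section

variable {X : Type*} [NormedAddCommGroup X] [NormedSpace ℝ X]

def IsProjOnto (Y : Submodule ℝ X) (P : X →L[ℝ] X) : Prop :=
  (∀ x, P x ∈ Y) ∧ ∀ y ∈ Y, P y = y

def relProjConst (Y : Submodule ℝ X) : ℝ :=
  sInf {c | ∃ P : X →L[ℝ] X, IsProjOnto Y P ∧ ‖P‖ = c}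

def MinProjSet (Y : Submodule ℝ X) : Set (X →L[ℝ] X) :=
  {P | IsProjOnto Y P ∧ ‖P‖ = relProjConst Y}

def IsPolyhedralSpace (X : Type*) [NormedAddCommGroup X] [NormedSpace ℝ X] : Prop :=
  ∃ s : Finset X, closedBall (0 : X) 1 = convexHull ℝ (s : Set X)

open Set

-- continuous linear functional on nonempty compact set attains max at an extreme point
lemma exists_extremePoint_isMaxOn {E : Type*} [NormedAddCommGroup E] [NormedSpace ℝ E]
    {C : Set E} (hC : IsCompact C) (hne : C.Nonempty) (f : E →L[ℝ] ℝ) :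
    ∃ x ∈ C.extremePoints ℝ, ∀ y ∈ C, f y ≤ f x := by
  obtain ⟨x₀, hx₀C, hx₀⟩ := hC.exists_isMaxOn hne f.continuous.continuousOn
  set B := f.toExposed C with hB
  have hexp : IsExposed ℝ C B := ContinuousLinearMap.toExposed.isExposed
  have hBne : B.Nonempty := ⟨x₀, hx₀C, fun y hy => hx₀ hy⟩
  have hBcomp : IsCompact B := hexp.isCompact hC
  obtain ⟨b, hb⟩ := hBcomp.extremePoints_nonempty hBne
  exact ⟨b, hexp.isExtreme.extremePoints_subset_extremePoints hb,
    (extremePoints_subset hb).2⟩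

lemma dual_ball_char {s : Finset X} (hs : closedBall (0 : X) 1 = convexHull ℝ (s : Set X))
    (f : X →L[ℝ] ℝ) : ‖f‖ ≤ 1 ↔ ∀ x ∈ (s : Set X), f x ≤ 1 := by
  constructor
  · intro hf x hx
    have hxball : x ∈ closedBall (0 : X) 1 := by
      rw [hs]; exact subset_convexHull ℝ _ hx
    have : ‖x‖ ≤ 1 := by simpa [mem_closedBall, dist_eq_norm] using hxball
    calc f x ≤ ‖f x‖ := le_abs_self _
      _ ≤ ‖f‖ * ‖x‖ := f.le_opNorm x
      _ ≤ 1 * 1 := by apply mul_le_mul hf this (norm_nonneg _) zero_le_one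
      _ = 1 := one_mul 1
  · intro h
    have hball : ∀ x ∈ closedBall (0 : X) 1, f x ≤ 1 := by
      rw [hs]
      exact convexHull_min h (convex_halfSpace_le (f : X →ₗ[ℝ] ℝ).isLinear 1)
    refine f.opNorm_le_bound zero_le_one (fun x => ?_)
    rcases eq_or_ne x 0 with rfl | hx
    · simp
    · have hxu : ‖x‖⁻¹ • x ∈ closedBall (0 : X) 1 := by
        have hnx : (0:ℝ) < ‖x‖ := norm_pos_iff.mpr hx
        simp [mem_closedBall, dist_eq_norm, norm_smul, abs_inv,
          abs_of_nonneg (norm_nonneg x), inv_mul_le_one₀ hnx]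
      have h1 : f (‖x‖⁻¹ • x) ≤ 1 := hball _ hxu
      have h2 : f (-(‖x‖⁻¹ • x)) ≤ 1 := hball _ (by
        rw [mem_closedBall, dist_eq_norm] at hxu ⊢; simpa using hxu)
      rw [map_neg] at h2
      have habs : |f (‖x‖⁻¹ • x)| ≤ 1 := abs_le.2 ⟨by linarith, h1⟩
      rw [map_smul, smul_eq_mul, abs_mul, abs_inv, abs_of_nonneg (norm_nonneg x)] at habs
      have hnx : (0:ℝ) < ‖x‖ := norm_pos_iff.mpr hx
      calc ‖f x‖ = |f x| := rfl
        _ ≤ ‖x‖ := by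
            rw [inv_mul_le_one₀ hnx] at habs
            · simpa using habs
        _ = 1 * ‖x‖ := (one_mul _).symm

-- tight set of an extreme point of the dual ball spans
lemma tight_spans [FiniteDimensional ℝ X] {s : Finset X}
    (hs : closedBall (0 : X) 1 = convexHull ℝ (s : Set X))
    {f : X →L[ℝ] ℝ} (hf : f ∈ Set.extremePoints ℝ (closedBall (0 : X →L[ℝ] ℝ) 1)) :
    Submodule.span ℝ {x ∈ (s : Set X) | f x = 1} = ⊤ := by
  by_contra hne
  set A : Set X := {x ∈ (s : Set X) | f x = 1} with hA
  have hlt : Submodule.span ℝ A < ⊤ := lt_top_iff_ne_top.mpr hne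
  obtain ⟨φ, hφne, hφbot⟩ := Submodule.exists_dual_map_eq_bot_of_lt_top hlt inferInstance
  -- make φ continuous
  set g : X →L[ℝ] ℝ := LinearMap.toContinuousLinearMap φ with hg
  have hgA : ∀ x ∈ A, g x = 0 := by
    intro x hx
    have : φ x ∈ (Submodule.span ℝ A).map φ :=
      Submodule.mem_map_of_mem (Submodule.subset_span hx)
    rw [hφbot] at this
    simpa [hg] using this
  have hgne : g ≠ 0 := by
    intro h
    apply hφne
    ext x
    have : g x = 0 := by rw [h]; rfl
    simpa [hg] using this
  -- choose small ε
  have hfs : ∀ x ∈ (s : Set X), f x ≤ 1 := by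
    refine (dual_ball_char hs f).1 ?_
    have := hf.1
    simpa [mem_closedBall, dist_eq_norm] using this
  classical
  set t : Finset X := s.filter (fun x => ¬ (f x = 1)) with ht
  set ε : ℝ := if h : t.Nonempty then
      (t.image (fun x => (1 - f x) / (|g x| + 1))).min' (h.image _) else 1 with hε
  have hεpos : 0 < ε := by
    rw [hε]
    split_ifs with h
    · rw [Finset.lt_min'_iff]
      intro y hy
      obtain ⟨x, hx, rfl⟩ := Finset.mem_image.mp hy
      have hxs : x ∈ s := (Finset.mem_filter.mp hx).1
      have hxlt : f x < 1 := lt_of_le_of_ne (hfs x hxs) (Finset.mem_filter.mp hx).2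
      apply div_pos (by linarith) (by positivity)
    · exact one_pos
  have hεle : ∀ x ∈ (s : Set X), f x ≠ 1 → ε ≤ (1 - f x) / (|g x| + 1) := by
    intro x hxs hxne
    have hxt : x ∈ t := Finset.mem_filter.mpr ⟨hxs, hxne⟩
    rw [hε]
    rw [dif_pos ⟨x, hxt⟩]
    exact Finset.min'_le _ _ (Finset.mem_image_of_mem _ hxt)
  -- both perturbations are in the ball
  have key : ∀ (σ : ℝ), σ = 1 ∨ σ = -1 → ‖f + (σ * ε) • g‖ ≤ 1 := by
    intro σ hσ
    refine (dual_ball_char hs _).2 ?_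
    intro x hxs
    by_cases hx1 : f x = 1
    · have : g x = 0 := hgA x ⟨hxs, hx1⟩
      simp [this, hx1]
    · have h1 : ε ≤ (1 - f x) / (|g x| + 1) := hεle x hxs hx1
      have h2 : ε * (|g x| + 1) ≤ 1 - f x := by
        rw [div_eq_mul_inv] at h1
        have hpos : (0:ℝ) < |g x| + 1 := by positivity
        calc ε * (|g x| + 1) ≤ ((1 - f x) * (|g x| + 1)⁻¹) * (|g x| + 1) := by
              apply mul_le_mul_of_nonneg_right h1 hpos.le
          _ = 1 - f x := by field_simp
      have hσε : |σ * ε| = ε := by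
        rcases hσ with rfl | rfl <;> simp [abs_of_pos hεpos]
      have : (σ * ε) * g x ≤ ε * |g x| := by
        calc (σ * ε) * g x ≤ |(σ * ε) * g x| := le_abs_self _
          _ = ε * |g x| := by rw [abs_mul, hσε]
      have hb : ε * |g x| ≤ 1 - f x := by nlinarith [abs_nonneg (g x)]
      simp only [ContinuousLinearMap.add_apply, ContinuousLinearMap.coe_smul',
        Pi.smul_apply, smul_eq_mul]
      linarith
  -- contradiction with extremality
  have h1 : f + ε • g ∈ closedBall (0 : X →L[ℝ] ℝ) 1 := by
    rw [mem_closedBall, dist_eq_norm, sub_zero]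
    simpa using key 1 (Or.inl rfl)
  have h2 : f - ε • g ∈ closedBall (0 : X →L[ℝ] ℝ) 1 := by
    rw [mem_closedBall, dist_eq_norm, sub_zero]
    have := key (-1) (Or.inr rfl)
    have heq : f + (-1 * ε) • g = f - ε • g := by
      ext x; simp; ring
    rwa [heq] at this
  have hmem : f ∈ openSegment ℝ (f + ε • g) (f - ε • g) := by
    rw [openSegment_eq_image]
    refine ⟨1/2, by norm_num, ?_⟩
    ext x
    simp only [ContinuousLinearMap.add_apply, ContinuousLinearMap.sub_apply,
      ContinuousLinearMap.coe_smul', Pi.smul_apply, smul_eq_mul]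
    ring
  have heq1 : f + ε • g = f := hf.2 h1 h2 hmem
  have : ε • g = 0 := by
    have h := congrArg (fun u => u - f) heq1
    simpa using h
  have : g = 0 := by
    have := smul_eq_zero.mp this
    rcases this with h | h
    · exact absurd h (ne_of_gt hεpos)
    · exact h
  exact hgne this

lemma dual_extremePoints_finite [FiniteDimensional ℝ X] {s : Finset X}
    (hs : closedBall (0 : X) 1 = convexHull ℝ (s : Set X)) :
    (Set.extremePoints ℝ (closedBall (0 : X →L[ℝ] ℝ) 1)).Finite := by
  classical
  set F := Set.extremePoints ℝ (closedBall (0 : X →L[ℝ] ℝ) 1) with hF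
  set τ : (X →L[ℝ] ℝ) → Finset X := fun f => s.filter (fun x => f x = 1) with hτ
  have hinj : Set.InjOn τ F := by
    intro f hf g hg hfg
    have hAf : {x ∈ (s : Set X) | f x = 1} = {x ∈ (s : Set X) | g x = 1} := by
      ext x
      simp only [Set.mem_setOf_eq]
      constructor
      · rintro ⟨hxs, hx1⟩
        have : x ∈ τ f := Finset.mem_filter.mpr ⟨hxs, hx1⟩
        rw [hfg] at this
        exact ⟨hxs, (Finset.mem_filter.mp this).2⟩
      · rintro ⟨hxs, hx1⟩
        have : x ∈ τ g := Finset.mem_filter.mpr ⟨hxs, hx1⟩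
        rw [← hfg] at this
        exact ⟨hxs, (Finset.mem_filter.mp this).2⟩
    have hspan := tight_spans hs hf
    apply ContinuousLinearMap.coe_injective
    apply LinearMap.ext_on hspan
    rintro x ⟨hxs, hx1⟩
    have hx1' : g x = 1 := by
      have : x ∈ {x ∈ (s : Set X) | g x = 1} := hAf ▸ ⟨hxs, hx1⟩
      exact this.2
    simp only [ContinuousLinearMap.coe_coe]
    rw [hx1, hx1']
  have himg : τ '' F ⊆ ↑s.powerset := by
    rintro _ ⟨f, _, rfl⟩
    simp only [Finset.coe_powerset, Set.mem_preimage, Set.mem_powerset_iff,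
      Finset.coe_subset]
    exact Finset.filter_subset _ _
  exact Set.Finite.of_finite_image (s.powerset.finite_toSet.subset himg) hinj

lemma pair_le_norm (P : X →L[ℝ] X) {x : X} (hx : ‖x‖ ≤ 1) {f : X →L[ℝ] ℝ}
    (hf : ‖f‖ ≤ 1) : f (P x) ≤ ‖P‖ := by
  calc f (P x) ≤ ‖f (P x)‖ := le_abs_self _
    _ ≤ ‖f‖ * ‖P x‖ := f.le_opNorm _
    _ ≤ 1 * (‖P‖ * ‖x‖) := by
        apply mul_le_mul hf (P.le_opNorm x) (norm_nonneg _) zero_le_one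
    _ ≤ 1 * (‖P‖ * 1) := by
        apply mul_le_mul_of_nonneg_left (mul_le_mul_of_nonneg_left hx (norm_nonneg P)) zero_le_one
    _ = ‖P‖ := by ring

lemma norm_attained [FiniteDimensional ℝ X] (P : X →L[ℝ] X) :
    ∃ x ∈ Set.extremePoints ℝ (closedBall (0 : X) 1),
      ∃ f ∈ Set.extremePoints ℝ (closedBall (0 : X →L[ℝ] ℝ) 1), f (P x) = ‖P‖ := by
  have hballc : IsCompact (closedBall (0 : X) 1) := isCompact_closedBall 0 1
  have hballne : (closedBall (0 : X) 1).Nonempty := ⟨0, by simp⟩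
  have hdballc : IsCompact (closedBall (0 : X →L[ℝ] ℝ) 1) := isCompact_closedBall 0 1
  have hdballne : (closedBall (0 : X →L[ℝ] ℝ) 1).Nonempty := ⟨0, by simp⟩
  -- norm of P attained on the ball
  obtain ⟨x₀, hx₀C, hx₀⟩ := hballc.exists_isMaxOn hballne (P.continuous.norm.continuousOn)
  have hx₀n : ‖x₀‖ ≤ 1 := by simpa [mem_closedBall, dist_eq_norm] using hx₀C
  have hM : ‖P‖ = ‖P x₀‖ := by
    apply le_antisymm
    · refine P.opNorm_le_bound (norm_nonneg _) (fun x => ?_)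
      rcases eq_or_ne x 0 with rfl | hxne
      · simp
      · have hnx : (0:ℝ) < ‖x‖ := norm_pos_iff.mpr hxne
        have hu : ‖x‖⁻¹ • x ∈ closedBall (0:X) 1 := by
          simp [mem_closedBall, dist_eq_norm, norm_smul, abs_of_nonneg (norm_nonneg x),
            inv_mul_le_one₀ hnx]
        have this : ‖P (‖x‖⁻¹ • x)‖ ≤ ‖P x₀‖ := hx₀ hu
        rw [map_smul, norm_smul, norm_inv, norm_norm] at this
        calc ‖P x‖ = ‖x‖ * (‖x‖⁻¹ * ‖P x‖) := by field_simp
          _ ≤ ‖x‖ * ‖P x₀‖ := by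
              apply mul_le_mul_of_nonneg_left _ (norm_nonneg x)
              simpa using this
          _ = ‖P x₀‖ * ‖x‖ := mul_comm _ _
    · calc ‖P x₀‖ ≤ ‖P‖ * ‖x₀‖ := P.le_opNorm x₀
        _ ≤ ‖P‖ * 1 := mul_le_mul_of_nonneg_left hx₀n (norm_nonneg _)
        _ = ‖P‖ := mul_one _
  -- dual: find extreme functional norming P x₀
  obtain ⟨f₁, hf₁n, hf₁⟩ := exists_dual_vector'' ℝ (P x₀)
  obtain ⟨f, hf, hfmax⟩ := exists_extremePoint_isMaxOn hdballc hdballne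
      ((ContinuousLinearMap.apply ℝ ℝ) (P x₀))
  have hfball : ‖f‖ ≤ 1 := by
    have := extremePoints_subset hf
    simpa [mem_closedBall, dist_eq_norm] using this
  have hf₁mem : f₁ ∈ closedBall (0 : X →L[ℝ] ℝ) 1 := by
    simpa [mem_closedBall, dist_eq_norm] using hf₁n
  have hfPx₀ : f (P x₀) = ‖P‖ := by
    have h1 : ‖P x₀‖ ≤ f (P x₀) := by
      have := hfmax f₁ hf₁mem
      simpa [hf₁] using this
    have h2 : f (P x₀) ≤ ‖P x₀‖ := by
      calc f (P x₀) ≤ ‖f (P x₀)‖ := le_abs_self _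
        _ ≤ ‖f‖ * ‖P x₀‖ := f.le_opNorm _
        _ ≤ 1 * ‖P x₀‖ := mul_le_mul_of_nonneg_right hfball (norm_nonneg _)
        _ = ‖P x₀‖ := one_mul _
    rw [hM]
    linarith
  -- primal: find extreme point maximizing f ∘ P
  obtain ⟨x, hx, hxmax⟩ := exists_extremePoint_isMaxOn hballc hballne (f.comp P)
  have hxn : ‖x‖ ≤ 1 := by
    have := extremePoints_subset hx
    simpa [mem_closedBall, dist_eq_norm] using this
  refine ⟨x, hx, f, hf, le_antisymm (pair_le_norm P hxn hfball) ?_⟩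
  have := hxmax x₀ hx₀C
  simp only [ContinuousLinearMap.comp_apply] at this
  linarith [hfPx₀ ▸ this]

lemma proj_exists [FiniteDimensional ℝ X] (Y : Submodule ℝ X) :
    ∃ P : X →L[ℝ] X, IsProjOnto Y P := by
  obtain ⟨Z, hZ⟩ := Submodule.exists_isCompl Y
  set p : X →ₗ[ℝ] X := Y.subtype.comp (Y.linearProjOfIsCompl Z hZ) with hp
  refine ⟨LinearMap.toContinuousLinearMap p, ?_, ?_⟩
  · intro x
    simp [hp]
  · intro y hy
    simp [hp, Submodule.projectionOnto_apply_left hZ ⟨y, hy⟩]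
    exact congrArg Subtype.val (Submodule.projectionOnto_apply_left hZ ⟨y, hy⟩)

lemma projSet_isClosed [FiniteDimensional ℝ X] (Y : Submodule ℝ X) :
    IsClosed {P : X →L[ℝ] X | IsProjOnto Y P} := by
  have h1 : {P : X →L[ℝ] X | IsProjOnto Y P} =
      (⋂ x : X, {P : X →L[ℝ] X | P x ∈ Y}) ∩ (⋂ y ∈ Y, {P : X →L[ℝ] X | P y = y}) := by
    ext P
    simp [IsProjOnto, Set.mem_iInter]
  rw [h1]
  apply IsClosed.inter
  · apply isClosed_iInter
    intro x
    exact (Submodule.closed_of_finiteDimensional Y).preimage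
      ((ContinuousLinearMap.apply ℝ X x).continuous)
  · apply isClosed_iInter; intro y; apply isClosed_iInter; intro _
    exact isClosed_singleton.preimage ((ContinuousLinearMap.apply ℝ X y).continuous)

lemma minProjSet_nonempty [FiniteDimensional ℝ X] (Y : Submodule ℝ X) :
    (MinProjSet Y).Nonempty := by
  obtain ⟨P₀, hP₀⟩ := proj_exists Y
  set A := {P : X →L[ℝ] X | IsProjOnto Y P} with hA
  have hAc : IsClosed A := projSet_isClosed Y
  set K := A ∩ closedBall (0 : X →L[ℝ] X) ‖P₀‖ with hK
  have hKc : IsCompact K := (isCompact_closedBall _ _).inter_left hAc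
  have hKne : K.Nonempty := ⟨P₀, hP₀, by simp [mem_closedBall, dist_eq_norm]⟩
  obtain ⟨P₁, hP₁K, hP₁⟩ := hKc.exists_isMinOn hKne continuous_norm.continuousOn
  have hSne : {c | ∃ P : X →L[ℝ] X, IsProjOnto Y P ∧ ‖P‖ = c}.Nonempty :=
    ⟨‖P₀‖, P₀, hP₀, rfl⟩
  have hSbdd : BddBelow {c | ∃ P : X →L[ℝ] X, IsProjOnto Y P ∧ ‖P‖ = c} := by
    refine ⟨0, ?_⟩
    rintro c ⟨P, _, rfl⟩
    exact norm_nonneg P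
  refine ⟨P₁, hP₁K.1, le_antisymm ?_ ?_⟩
  · apply le_csInf hSne
    rintro c ⟨P, hP, rfl⟩
    by_cases h : ‖P‖ ≤ ‖P₀‖
    · exact hP₁ ⟨hP, by simpa [mem_closedBall, dist_eq_norm] using h⟩
    · have h1 : ‖P₁‖ ≤ ‖P₀‖ := by
        simpa [mem_closedBall, dist_eq_norm] using hP₁K.2
      linarith
  · exact csInf_le hSbdd ⟨P₁, hP₁K.1, rfl⟩

lemma relProjConst_le [FiniteDimensional ℝ X] {Y : Submodule ℝ X} {P : X →L[ℝ] X}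
    (hP : IsProjOnto Y P) : relProjConst Y ≤ ‖P‖ := by
  have hbdd : BddBelow {c | ∃ Q : X →L[ℝ] X, IsProjOnto Y Q ∧ ‖Q‖ = c} := by
    refine ⟨0, ?_⟩
    rintro c ⟨Q, _, rfl⟩
    exact norm_nonneg Q
  exact csInf_le hbdd ⟨P, hP, rfl⟩

lemma minProjSet_convex [FiniteDimensional ℝ X] (Y : Submodule ℝ X) :
    Convex ℝ (MinProjSet Y) := by
  rintro P ⟨hP, hPn⟩ Q ⟨hQ, hQn⟩ a b ha hb hab
  have hproj : IsProjOnto Y (a • P + b • Q) := by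
    constructor
    · intro x
      simp only [ContinuousLinearMap.add_apply, ContinuousLinearMap.coe_smul',
        Pi.smul_apply]
      exact Y.add_mem (Y.smul_mem a (hP.1 x)) (Y.smul_mem b (hQ.1 x))
    · intro y hy
      simp only [ContinuousLinearMap.add_apply, ContinuousLinearMap.coe_smul',
        Pi.smul_apply, hP.2 y hy, hQ.2 y hy]
      rw [← add_smul, hab, one_smul]
  refine ⟨hproj, le_antisymm ?_ (relProjConst_le hproj)⟩
  calc ‖a • P + b • Q‖ ≤ ‖a • P‖ + ‖b • Q‖ := norm_add_le _ _
    _ = a * ‖P‖ + b * ‖Q‖ := by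
        rw [norm_smul a P, norm_smul b Q, Real.norm_eq_abs, Real.norm_eq_abs,
          abs_of_nonneg ha, abs_of_nonneg hb]
    _ = relProjConst Y := by rw [hPn, hQn, ← add_mul, hab, one_mul]

lemma minProjSet_isCompact [FiniteDimensional ℝ X] (Y : Submodule ℝ X) :
    IsCompact (MinProjSet Y) := by
  have hcl : IsClosed (MinProjSet Y) := by
    have : MinProjSet Y = {P : X →L[ℝ] X | IsProjOnto Y P} ∩
        (norm ⁻¹' {relProjConst Y}) := rfl
    rw [this]
    exact (projSet_isClosed Y).inter (isClosed_singleton.preimage continuous_norm)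
  have hsub : MinProjSet Y ⊆ closedBall (0 : X →L[ℝ] X) (relProjConst Y) := by
    rintro P ⟨_, hPn⟩
    simp [mem_closedBall, dist_eq_norm, hPn]
  exact (isCompact_closedBall _ _).of_isClosed_subset hcl hsub

lemma pert_exists [FiniteDimensional ℝ X] (Y : Submodule ℝ X) :
    ∃ J : ((X ⧸ Y) →ₗ[ℝ] Y) →ₗ[ℝ] (X →L[ℝ] X), Function.Injective J ∧
      (∀ v x, J v x ∈ Y) ∧ (∀ v, ∀ y ∈ Y, J v y = 0) := by
  let J : ((X ⧸ Y) →ₗ[ℝ] Y) →ₗ[ℝ] (X →L[ℝ] X) :=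
    { toFun := fun v => LinearMap.toContinuousLinearMap (Y.subtype ∘ₗ v ∘ₗ Y.mkQ)
      map_add' := fun v w => by ext x; simp
      map_smul' := fun c v => by ext x; simp }
  refine ⟨J, ?_, ?_, ?_⟩
  · intro v w h
    ext x
    have := congrArg (fun T => (T : X →L[ℝ] X) x) h
    simp only [J, LinearMap.coe_mk, AddHom.coe_mk,
      LinearMap.coe_toContinuousLinearMap', LinearMap.comp_apply] at this
    simpa using this
  · intro v x
    simp only [J, LinearMap.coe_mk, AddHom.coe_mk, LinearMap.coe_toContinuousLinearMap',
      LinearMap.comp_apply]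
    exact (v (Y.mkQ x)).2
  · intro v y hy
    simp only [J, LinearMap.coe_mk, AddHom.coe_mk, LinearMap.coe_toContinuousLinearMap',
      LinearMap.comp_apply]
    have h0 : Y.mkQ y = 0 := (Submodule.Quotient.mk_eq_zero Y).mpr hy
    rw [h0]
    simp

lemma pert_finrank [FiniteDimensional ℝ X] (Y : Submodule ℝ X) {n k : ℕ}
    (hn : finrank ℝ X = n) (hk : finrank ℝ Y = k) (hk1 : 1 ≤ k) (hkn : k + 1 ≤ n) :
    n ≤ finrank ℝ ((X ⧸ Y) →ₗ[ℝ] Y) + 1 := by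
  have hq : finrank ℝ (X ⧸ Y) = n - k := by
    have := Submodule.finrank_quotient_add_finrank Y
    rw [hn, hk] at this
    omega
  rw [Module.finrank_linearMap, hq, hk]
  obtain ⟨c, hc⟩ : ∃ c, n - k = c + 1 := ⟨n - k - 1, by omega⟩
  rw [hc]
  have h1 : c * 1 ≤ c * k := Nat.mul_le_mul_left c hk1
  have : (c + 1) * k = c * k + k := by ring
  rw [this]
  omega

set_option maxHeartbeats 1000000 in
/-- In an `n`-dimensional polyhedral space, every `k`-dimensional subspace
(`1 ≤ k ≤ n-1`) admits a minimal projection with at least `n` norming pairs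
`(x, f) ∈ ext B_X × ext B_{X*}`, `f (P x) = ‖P‖`. -/
theorem exists_minProj_with_many_norming_pairs [FiniteDimensional ℝ X]
    (hpoly : IsPolyhedralSpace X) {n k : ℕ} (hn : finrank ℝ X = n)
    (Y : Submodule ℝ X) (hk : finrank ℝ Y = k) (hk1 : 1 ≤ k) (hkn : k ≤ n - 1) :
    ∃ P ∈ MinProjSet Y, ∃ s : Finset (X × (X →L[ℝ] ℝ)),
      n ≤ s.card ∧
      ∀ p ∈ s, p.1 ∈ Set.extremePoints ℝ (closedBall (0 : X) 1) ∧
        p.2 ∈ Set.extremePoints ℝ (closedBall (0 : X →L[ℝ] ℝ) 1) ∧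
        p.2 (P p.1) = ‖P‖ := by
  classical
  obtain ⟨s, hs⟩ := hpoly
  have hn1 : k + 1 ≤ n := by
    rcases Nat.eq_zero_or_pos n with rfl | hnp
    · omega
    · omega
  -- the finite sets of extreme points
  have hEfin : (Set.extremePoints ℝ (closedBall (0 : X) 1)).Finite := by
    apply s.finite_toSet.subset
    rw [hs]
    exact extremePoints_convexHull_subset
  have hFfin : (Set.extremePoints ℝ (closedBall (0 : X →L[ℝ] ℝ) 1)).Finite :=
    dual_extremePoints_finite hs
  set Ef : Finset X := hEfin.toFinset with hEf
  set Ff : Finset (X →L[ℝ] ℝ) := hFfin.toFinset with hFf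
  set μ : ℝ := relProjConst Y with hμ
  -- an extreme point of the (nonempty compact convex) set of minimal projections
  obtain ⟨P, hPext⟩ := (minProjSet_isCompact Y).extremePoints_nonempty
    (minProjSet_nonempty Y)
  have hPmem : P ∈ MinProjSet Y := extremePoints_subset hPext
  have hPnorm : ‖P‖ = μ := hPmem.2
  -- active pairs
  set act : Finset (X × (X →L[ℝ] ℝ)) :=
    (Ef ×ˢ Ff).filter (fun p => p.2 (P p.1) = μ) with hact
  have hactmem : ∀ p ∈ act, p.1 ∈ Set.extremePoints ℝ (closedBall (0 : X) 1) ∧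
      p.2 ∈ Set.extremePoints ℝ (closedBall (0 : X →L[ℝ] ℝ) 1) ∧ p.2 (P p.1) = ‖P‖ := by
    intro p hp
    obtain ⟨hp1, hp2⟩ := Finset.mem_filter.mp hp
    obtain ⟨hpa, hpb⟩ := Finset.mem_product.mp hp1
    exact ⟨hEfin.mem_toFinset.mp hpa, hFfin.mem_toFinset.mp hpb, by rw [hPnorm]; exact hp2⟩
  refine ⟨P, hPmem, act, ?_, hactmem⟩
  -- counting via an injective linear map (V × ℝ) → (act → ℝ)
  obtain ⟨J, hJinj, hJY, hJ0⟩ := pert_exists Y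
  have hdim : n ≤ finrank ℝ ((X ⧸ Y) →ₗ[ℝ] Y) + 1 := pert_finrank Y hn hk hk1 hn1
  -- basic norm bounds for extreme pairs
  have hExn : ∀ x ∈ Ef, ‖x‖ ≤ 1 := by
    intro x hx
    have := extremePoints_subset (hEfin.mem_toFinset.mp hx)
    simpa [mem_closedBall, dist_eq_norm] using this
  have hFfn : ∀ f ∈ Ff, ‖f‖ ≤ 1 := by
    intro f hf
    have := extremePoints_subset (hFfin.mem_toFinset.mp hf)
    simpa [mem_closedBall, dist_eq_norm] using this
  have hpairle : ∀ Q : X →L[ℝ] X, ∀ p ∈ Ef ×ˢ Ff, p.2 (Q p.1) ≤ ‖Q‖ := by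
    intro Q p hp
    obtain ⟨hpa, hpb⟩ := Finset.mem_product.mp hp
    exact pair_le_norm Q (hExn _ hpa) (hFfn _ hpb)
  -- key: norm of any map is attained on a pair from Ef ×ˢ Ff
  have hattain : ∀ Q : X →L[ℝ] X, ∃ p ∈ Ef ×ˢ Ff, p.2 (Q p.1) = ‖Q‖ := by
    intro Q
    obtain ⟨x, hx, f, hf, hxf⟩ := norm_attained Q
    exact ⟨(x, f), Finset.mem_product.mpr
      ⟨hEfin.mem_toFinset.mpr hx, hFfin.mem_toFinset.mpr hf⟩, hxf⟩
  -- the linear map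
  set V := (X ⧸ Y) →ₗ[ℝ] Y with hV
  let Θ : (V × ℝ) →ₗ[ℝ] ({p : X × (X →L[ℝ] ℝ) // p ∈ act} → ℝ) :=
    { toFun := fun vt p => p.1.2 ((J vt.1) p.1.1) - vt.2
      map_add' := fun a b => by
        funext p
        simp only [map_add, ContinuousLinearMap.add_apply, Prod.fst_add, Prod.snd_add,
          Pi.add_apply]
        ring
      map_smul' := fun c a => by
        funext p
        simp only [map_smul, Prod.smul_fst, Prod.smul_snd, RingHom.id_apply, Pi.smul_apply,
          ContinuousLinearMap.coe_smul', Pi.smul_apply, smul_eq_mul]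
        ring }
  have hΘinj : Function.Injective Θ := by
    rw [injective_iff_map_eq_zero]
    rintro ⟨v, τ⟩ hvτ
    have hker : ∀ p ∈ act, p.2 ((J v) p.1) = τ := by
      intro p hp
      have := congrFun hvτ ⟨p, hp⟩
      simp only [Pi.zero_apply] at this
      linarith [sub_eq_zero.mp this]
    set L : X →L[ℝ] X := J v with hL
    -- slack for inactive pairs
    set inact : Finset (X × (X →L[ℝ] ℝ)) := (Ef ×ˢ Ff) \ act with hinact
    have hslack : ∀ p ∈ inact, p.2 (P p.1) < μ := by
      intro p hp
      obtain ⟨hp1, hp2⟩ := Finset.mem_sdiff.mp hp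
      have hle : p.2 (P p.1) ≤ μ := hPnorm ▸ hpairle P p hp1
      have hne : p.2 (P p.1) ≠ μ := by
        intro h
        exact hp2 (Finset.mem_filter.mpr ⟨hp1, h⟩)
      exact lt_of_le_of_ne hle hne
    set ε : ℝ := if h : inact.Nonempty then
        (inact.image (fun p => (μ - p.2 (P p.1)) / (|p.2 (L p.1)| + |τ| + 1))).min'
          (h.image _) else 1 with hε
    have hεpos : 0 < ε := by
      rw [hε]
      split_ifs with h
      · rw [Finset.lt_min'_iff]
        intro y hy
        obtain ⟨p, hp, rfl⟩ := Finset.mem_image.mp hy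
        have := hslack p hp
        apply div_pos (by linarith) (by positivity)
      · exact one_pos
    have hεle : ∀ p ∈ inact, ε ≤ (μ - p.2 (P p.1)) / (|p.2 (L p.1)| + |τ| + 1) := by
      intro p hp
      rw [hε, dif_pos ⟨p, hp⟩]
      exact Finset.min'_le _ _ (Finset.mem_image_of_mem _ hp)
    -- the two perturbations
    have hpert : ∀ (σ : ℝ), σ = 1 ∨ σ = -1 →
        IsProjOnto Y (P + (σ * ε) • L) ∧ ‖P + (σ * ε) • L‖ ≤ μ + σ * ε * τ := by
      intro σ hσ
      have hσabs : |σ| = 1 := by rcases hσ with rfl | rfl <;> simp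
      constructor
      · constructor
        · intro x
          simp only [ContinuousLinearMap.add_apply, ContinuousLinearMap.coe_smul',
            Pi.smul_apply]
          exact Y.add_mem (hPmem.1.1 x) (Y.smul_mem _ (hJY v x))
        · intro y hy
          simp only [ContinuousLinearMap.add_apply, ContinuousLinearMap.coe_smul',
            Pi.smul_apply]
          rw [hPmem.1.2 y hy, hJ0 v y hy]
          simp
      · obtain ⟨p, hpEF, hpeq⟩ := hattain (P + (σ * ε) • L)
        rw [← hpeq]
        simp only [ContinuousLinearMap.add_apply, ContinuousLinearMap.coe_smul',
          Pi.smul_apply, map_add, map_smul, smul_eq_mul]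
        by_cases hpact : p ∈ act
        · have h1 : p.2 (P p.1) = μ := (Finset.mem_filter.mp hpact).2
          have h2 : p.2 (L p.1) = τ := hker p hpact
          rw [h1, h2]
        · have hpin : p ∈ inact := Finset.mem_sdiff.mpr ⟨hpEF, hpact⟩
          have h1 : ε * (|p.2 (L p.1)| + |τ| + 1) ≤ μ - p.2 (P p.1) := by
            have := hεle p hpin
            have hpos : (0:ℝ) < |p.2 (L p.1)| + |τ| + 1 := by positivity
            calc ε * (|p.2 (L p.1)| + |τ| + 1)
                ≤ ((μ - p.2 (P p.1)) / (|p.2 (L p.1)| + |τ| + 1)) *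
                  (|p.2 (L p.1)| + |τ| + 1) := mul_le_mul_of_nonneg_right this hpos.le
              _ = μ - p.2 (P p.1) := by field_simp
          have h2 : σ * ε * p.2 (L p.1) ≤ ε * |p.2 (L p.1)| := by
            calc σ * ε * p.2 (L p.1) ≤ |σ * ε * p.2 (L p.1)| := le_abs_self _
              _ = ε * |p.2 (L p.1)| := by
                  rw [abs_mul, abs_mul, hσabs, abs_of_pos hεpos]; ring
          have h3 : -(ε * |τ|) ≤ σ * ε * τ := by
            calc -(ε * |τ|) = -|σ * ε * τ| := by
                  rw [abs_mul, abs_mul, hσabs, abs_of_pos hεpos]; ring_nf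
              _ ≤ σ * ε * τ := neg_abs_le _
          nlinarith [abs_nonneg (p.2 (L p.1)), abs_nonneg τ, hεpos]
      -- end hpert
    obtain ⟨hprojPl, hnormPl⟩ := hpert 1 (Or.inl rfl)
    obtain ⟨hprojMi, hnormMi⟩ := hpert (-1) (Or.inr rfl)
    simp only [one_mul] at hprojPl hnormPl
    have hgePl : μ ≤ ‖P + ε • L‖ := relProjConst_le hprojPl
    have hgeMi : μ ≤ ‖P + (-1 * ε) • L‖ := relProjConst_le hprojMi
    -- conclude τ = 0
    have hτ0 : τ = 0 := by nlinarith
    -- so both perturbations are minimal projections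
    have hmemPl : P + ε • L ∈ MinProjSet Y := by
      refine ⟨hprojPl, le_antisymm ?_ hgePl⟩
      have := hnormPl
      rw [hτ0, mul_zero, add_zero] at this
      exact this
    have hmemMi : P + (-1 * ε) • L ∈ MinProjSet Y := by
      refine ⟨hprojMi, le_antisymm ?_ hgeMi⟩
      have := hnormMi
      rw [hτ0, mul_zero, add_zero] at this
      exact this
    -- extremality forces L = 0
    have hseg : P ∈ openSegment ℝ (P + ε • L) (P + (-1 * ε) • L) := by
      rw [openSegment_eq_image]
      refine ⟨1/2, by norm_num, ?_⟩
      ext x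
      simp only [ContinuousLinearMap.add_apply, ContinuousLinearMap.coe_smul',
        Pi.smul_apply]
      module
    have heq := hPext.2 hmemPl hmemMi hseg
    have hεL : ε • L = 0 := by
      exact add_eq_left.mp heq
    have hL0 : L = 0 := by
      rcases smul_eq_zero.mp hεL with h | h
      · exact absurd h (ne_of_gt hεpos)
      · exact h
    have hJv0 : J v = 0 := by rw [← hL]; exact hL0
    have hv0 : v = 0 := hJinj (by rw [hJv0, map_zero])
    simp [hv0, hτ0]
  -- finrank chase
  have hrank : finrank ℝ (V × ℝ) ≤ finrank ℝ ({p : X × (X →L[ℝ] ℝ) // p ∈ act} → ℝ) :=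
    LinearMap.finrank_le_finrank_of_injective hΘinj
  have h1 : finrank ℝ (V × ℝ) = finrank ℝ V + 1 := by
    rw [Module.finrank_prod, Module.finrank_self]
  have h2 : finrank ℝ ({p : X × (X →L[ℝ] ℝ) // p ∈ act} → ℝ) = act.card := by
    rw [Module.finrank_pi]
    simp
  have h3 : finrank ℝ V = finrank ℝ ((X ⧸ Y) →ₗ[ℝ] Y) := rfl
  omega
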